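/- Let 0 < ε₁ ≤ 1/130 and d be sufficiently large. If H is an (ε₁, c'd)-expander produced by the Komlós–Szemerédi construction with average degree d(H) and minimum degree δ(H) ≥ d(H)/2, and ν := ε₁/(6 log²(5/c')), then H is νd-connected; i.e., H has no vertex cut of size less than νd. -/

import Mathlib

/-- The expansion function `ε(x) = ε(x, ε₁, t)`: it is `0` for `x < t/5` and
`ε₁ / log²(15x/t)` for `x ≥ t/5`. -/
noncomputable def epsFn (ε₁ t x : ℝ) : ℝ :=
  if x < t / 5 then 0 else ε₁ / (Real.log (15 * x / t)) ^ 2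

/-- The average degree `2e(G)/|V(G)|` of a graph. -/
noncomputable def avgDeg {V : Type*} (G : SimpleGraph V) : ℝ :=
  2 * (Nat.card G.edgeSet : ℝ) / (Nat.card V : ℝ)

/-- `H` is an `(ε₁, t)`-expander: every vertex set `X` with `t/2 ≤ |X| ≤ |H|/2` has
external neighbourhood of size at least `ε(|X|)·|X|`. -/
def IsExpander {V : Type*} (H : SimpleGraph V) (ε₁ t : ℝ) : Prop :=
  ∀ X : Set V, t / 2 ≤ (X.ncard : ℝ) → (X.ncard : ℝ) ≤ (Nat.card V : ℝ) / 2 →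
    epsFn ε₁ t (X.ncard : ℝ) * (X.ncard : ℝ)
      ≤ (({v | v ∉ X ∧ ∃ u ∈ X, H.Adj u v} : Set V).ncard : ℝ)

lemma aux_sq (r L : ℝ) (hr : 1 ≤ r) (hL : 2 ≤ L) :
    (Real.log r + L) ^ 2 ≤ r * L ^ 2 := by
  have hr0 : (0:ℝ) < r := lt_of_lt_of_le one_pos hr
  have hs1 : 1 ≤ Real.sqrt r := by
    rw [show (1:ℝ) = Real.sqrt 1 by simp]
    exact Real.sqrt_le_sqrt hr
  have hlog : Real.log r = 2 * Real.log (Real.sqrt r) := by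
    rw [Real.log_sqrt hr0.le]; ring
  have h2 : Real.log (Real.sqrt r) ≤ Real.sqrt r - 1 :=
    Real.log_le_sub_one_of_pos (by positivity)
  have hsq : Real.sqrt r ^ 2 = r := Real.sq_sqrt hr0.le
  have hlg0 : 0 ≤ Real.log r := Real.log_nonneg hr
  have h3 : Real.log r + L ≤ L * Real.sqrt r := by nlinarith
  calc (Real.log r + L) ^ 2 ≤ (L * Real.sqrt r) ^ 2 := by
        apply pow_le_pow_left₀ (by linarith) h3
    _ = r * L ^ 2 := by rw [mul_pow, hsq]; ring

lemma aux_log (c' d x : ℝ) (hc0 : 0 < c') (hc2 : c' < 1/2) (hd : 0 < d)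
    (hx : d / 3 ≤ x) :
    d / (3 * (Real.log (5 / c')) ^ 2) ≤ x / (Real.log (15 * x / (c' * d))) ^ 2 := by
  have hx0 : 0 < x := by linarith
  set L := Real.log (5 / c') with hLdef
  have h10 : (10:ℝ) ≤ 5 / c' := by rw [le_div_iff₀ hc0]; linarith
  have hexp2 : Real.exp 2 ≤ 10 := by
    have h1 := Real.exp_one_lt_d9
    have h2 : Real.exp 2 = Real.exp 1 * Real.exp 1 := by
      rw [← Real.exp_add]; norm_num
    nlinarith [Real.exp_pos 1]
  have hL2 : (2:ℝ) ≤ L := by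
    rw [hLdef, Real.le_log_iff_exp_le (by positivity)]
    linarith
  have hr1 : (1:ℝ) ≤ 3 * x / d := by rw [le_div_iff₀ hd]; linarith
  have hr0 : (0:ℝ) < 3 * x / d := by positivity
  have hrw : 15 * x / (c' * d) = (3 * x / d) * (5 / c') := by
    field_simp; ring
  have hlsum : Real.log (15 * x / (c' * d)) = Real.log (3 * x / d) + L := by
    rw [hrw, Real.log_mul (ne_of_gt hr0) (by positivity)]
  have hkey := aux_sq (3 * x / d) L hr1 hL2
  have hlogpos : 0 < Real.log (3 * x / d) + L := by
    have := Real.log_nonneg hr1; linarith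
  rw [hlsum, div_le_div_iff₀ (by positivity) (by positivity)]
  have hdr : d * (3 * x / d) = 3 * x := by field_simp
  nlinarith [hkey, hd.le]

lemma aux_cut {V : Type*} [Fintype V] (H : SimpleGraph V) (S : Set V)
    (hnc : ¬ (H.induce Sᶜ).Preconnected) :
    ∃ X : Set V, X.Nonempty ∧ (∀ w z, w ∈ X → H.Adj w z → z ∉ S → z ∈ X) ∧
      2 * (X.ncard : ℝ) ≤ (Nat.card V : ℝ) := by
  rw [SimpleGraph.Preconnected] at hnc
  push_neg at hnc
  obtain ⟨u, v, huv⟩ := hnc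
  set G := H.induce Sᶜ with hG
  set X₀ : Set V := {w | ∃ hw : w ∈ Sᶜ, G.Reachable u ⟨w, hw⟩} with hX0
  set Y : Set V := {w | ∃ hw : w ∈ Sᶜ, ¬ G.Reachable u ⟨w, hw⟩} with hY
  have hu : (u : V) ∈ X₀ := ⟨u.2, by exact SimpleGraph.Reachable.refl _⟩
  have hv : (v : V) ∈ Y := ⟨v.2, huv⟩
  have hdisj : Disjoint X₀ Y := by
    rw [Set.disjoint_left]
    rintro w ⟨hw1, hr⟩ ⟨hw2, hnr⟩
    exact hnr hr
  have hclX : ∀ w z, w ∈ X₀ → H.Adj w z → z ∉ S → z ∈ X₀ := by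
    rintro w z ⟨hw, hr⟩ hadj hz
    refine ⟨hz, hr.trans (SimpleGraph.Adj.reachable ?_)⟩
    exact hadj
  have hclY : ∀ w z, w ∈ Y → H.Adj w z → z ∉ S → z ∈ Y := by
    rintro w z ⟨hw, hnr⟩ hadj hz
    refine ⟨hz, fun hr => hnr ?_⟩
    exact hr.trans (SimpleGraph.Adj.reachable (by exact hadj.symm))
  have hsum : X₀.ncard + Y.ncard ≤ Nat.card V := by
    rw [← Set.ncard_union_eq hdisj (Set.toFinite _) (Set.toFinite _)]
    rw [← Set.ncard_univ]
    exact Set.ncard_le_ncard (Set.subset_univ _) (Set.toFinite _)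
  rcases le_total X₀.ncard Y.ncard with hle | hle
  · refine ⟨X₀, ⟨u, hu⟩, hclX, ?_⟩
    have : 2 * X₀.ncard ≤ Nat.card V := by omega
    exact_mod_cast this
  · refine ⟨Y, ⟨v, hv⟩, hclY, ?_⟩
    have : 2 * Y.ncard ≤ Nat.card V := by omega
    exact_mod_cast this

theorem stmt_10 (ε₁ : ℝ) (hε0 : 0 < ε₁) (hε1 : ε₁ ≤ 1 / 130) :
    ∃ d₀ : ℝ, ∀ d : ℝ, d₀ ≤ d →
      ∀ (V : Type*) [Fintype V] (H : SimpleGraph V) (c' C : ℝ),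
        0 < c' → c' < 1 / 2 → 12 < C → ε₁ ≤ 1 / (10 * C) →
        IsExpander H ε₁ (c' * d) →
        (1 - C * ε₁ / Real.log 3) * d ≤ avgDeg H →
        (∀ v : V, avgDeg H / 2 ≤ ((H.neighborSet v).ncard : ℝ)) →
        ∀ S : Set V, (S.ncard : ℝ) < (ε₁ / (6 * (Real.log (5 / c')) ^ 2)) * d →
          (H.induce Sᶜ).Preconnected := by
  refine ⟨1, fun d hd V _ H c' C hc0 hc2 hC hεC hexp havg hmin S hS => ?_⟩
  by_contra hnc
  have hd0 : (0:ℝ) < d := by linarith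
  set L := Real.log (5 / c') with hLdef
  -- basic numeric facts
  have h10 : (10:ℝ) ≤ 5 / c' := by rw [le_div_iff₀ hc0]; linarith
  have hexp2 : Real.exp 2 ≤ 10 := by
    have h1 := Real.exp_one_lt_d9
    have h2 : Real.exp 2 = Real.exp 1 * Real.exp 1 := by
      rw [← Real.exp_add]; norm_num
    nlinarith [Real.exp_pos 1]
  have hL2 : (2:ℝ) ≤ L := by
    rw [hLdef, Real.le_log_iff_exp_le (by positivity)]
    linarith
  have hL2sq : (4:ℝ) ≤ L ^ 2 := by nlinarith
  -- ν is small
  have hν : ε₁ / (6 * L ^ 2) ≤ 1 / 1000 := by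
    rw [div_le_div_iff₀ (by nlinarith) (by norm_num)]
    nlinarith
  -- ε₀ is small : C * ε₁ / log 3 ≤ 1/10
  have hlog3 : (1:ℝ) ≤ Real.log 3 := by
    rw [Real.le_log_iff_exp_le (by norm_num)]
    have := Real.exp_one_lt_d9
    linarith
  have hCε : C * ε₁ ≤ 1 / 10 := by
    have h1 : ε₁ * (10 * C) ≤ 1 := by
      rw [← le_div_iff₀ (by linarith : (0:ℝ) < 10 * C)]
      exact hεC
    nlinarith
  have hε₀ : C * ε₁ / Real.log 3 ≤ 1 / 10 := by
    rw [div_le_iff₀ (by linarith)]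
    nlinarith [mul_nonneg (le_of_lt (by linarith : (0:ℝ) < C)) hε0.le]
  -- extract the small side X of the disconnection
  obtain ⟨X, ⟨w, hw⟩, hXcl, hXhalf⟩ := aux_cut H S hnc
  -- external neighbourhood of X is inside S
  have hΓ : ({v | v ∉ X ∧ ∃ u ∈ X, H.Adj u v} : Set V) ⊆ S := by
    rintro z ⟨hzX, y, hyX, hadj⟩
    by_contra hzS
    exact hzX (hXcl y z hyX hadj hzS)
  -- min degree bound: X is large
  have hNsub : H.neighborSet w ⊆ (X \ {w}) ∪ S := by
    intro z hz
    rcases Classical.em (z ∈ S) with h | h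
    · exact Or.inr h
    · exact Or.inl ⟨hXcl w z hw hz h, fun he => H.irrefl (he ▸ hz)⟩
  have hX1 : 1 ≤ X.ncard := by
    have : 0 < X.ncard := (Set.ncard_pos (Set.toFinite _)).mpr ⟨w, hw⟩
    omega
  have hNcard : (H.neighborSet w).ncard ≤ (X.ncard - 1) + S.ncard := by
    calc (H.neighborSet w).ncard ≤ ((X \ {w}) ∪ S).ncard :=
          Set.ncard_le_ncard hNsub (Set.toFinite _)
      _ ≤ (X \ {w}).ncard + S.ncard := Set.ncard_union_le _ _
      _ = (X.ncard - 1) + S.ncard := by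
          rw [Set.ncard_diff_singleton_of_mem hw]
  have hNcardR : ((H.neighborSet w).ncard : ℝ) ≤ (X.ncard : ℝ) - 1 + S.ncard := by
    have := hNcard
    have h1 : ((X.ncard - 1 : ℕ) : ℝ) = (X.ncard : ℝ) - 1 := by
      rw [Nat.cast_sub hX1]; norm_num
    calc ((H.neighborSet w).ncard : ℝ) ≤ ((X.ncard - 1) + S.ncard : ℕ) := by
          exact_mod_cast this
      _ = (X.ncard : ℝ) - 1 + S.ncard := by push_cast [Nat.cast_sub hX1]; ring
  have hδ := hmin w
  have hεd : C * ε₁ / Real.log 3 * d ≤ 1 / 10 * d :=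
    mul_le_mul_of_nonneg_right hε₀ hd0.le
  have hνd : ε₁ / (6 * L ^ 2) * d ≤ 1 / 1000 * d :=
    mul_le_mul_of_nonneg_right hν hd0.le
  have hX3 : d / 3 ≤ (X.ncard : ℝ) := by linarith
  -- apply expansion
  have hXlo : c' * d / 2 ≤ (X.ncard : ℝ) := by
    have := mul_lt_mul_of_pos_right hc2 hd0
    linarith
  have hXhi : (X.ncard : ℝ) ≤ (Nat.card V : ℝ) / 2 := by linarith
  have hexpX := hexp X hXlo hXhi
  have hΓcard : (({v | v ∉ X ∧ ∃ u ∈ X, H.Adj u v} : Set V).ncard : ℝ) ≤ S.ncard := by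
    exact_mod_cast Set.ncard_le_ncard hΓ (Set.toFinite _)
  have hnotlt : ¬ ((X.ncard : ℝ) < c' * d / 5) := by
    push_neg
    have := mul_lt_mul_of_pos_right hc2 hd0
    linarith
  rw [epsFn, if_neg hnotlt] at hexpX
  have hmono := aux_log c' d (X.ncard : ℝ) hc0 hc2 hd0 hX3
  have hlb : ε₁ * (d / (3 * L ^ 2)) ≤ ε₁ / (Real.log (15 * (X.ncard : ℝ) / (c' * d))) ^ 2 * (X.ncard : ℝ) := by
    rw [div_mul_eq_mul_div, mul_div_assoc]
    exact mul_le_mul_of_nonneg_left hmono hε0.le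
  have hfinal : 2 * (ε₁ / (6 * L ^ 2) * d) ≤ (S.ncard : ℝ) := by
    calc 2 * (ε₁ / (6 * L ^ 2) * d) = ε₁ * (d / (3 * L ^ 2)) := by
          field_simp; ring
      _ ≤ _ := hlb
      _ ≤ _ := hexpX
      _ ≤ _ := hΓcard
  have hνpos : 0 < ε₁ / (6 * L ^ 2) * d := by positivity
  linarith
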